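/- arXiv:1107.4705 — 2 statements merged into one kernel-verified Lean document; each statement's English description precedes it below -/
import Mathlib

section
/- Let X_1,…,X_n be random variables taking values in finite nonempty sets A_1,…,A_n with strictly positive joint probability mass function p on A_1 × ⋯ × A_n. For each k ∈ {1,…,n} let S(k) and B(k) be disjoint subsets of {1,…,k−1} with pa(k) = S(k) ∪ B(k), and assume p factorizes along the DAG: p(x) = ∏_{k=1}^n p(x_k | x_{pa(k)}) for all x. Define q(x) := ∏_{k=1}^n p(x_k | x_{S(k)}). Then the relative entropy of p with respect to q satisfies ∑_x p(x) log( p(x) / q(x) ) = ∑_{k=1}^n I( X_k ; (X_u : u ∈ B(k)) | (X_u : u ∈ S(k)) ), where I(X;Y|Z) denotes conditional mutual information. -/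
open Finset

/-- The marginal pmf of the coordinates in `S`: `marg p S x` is the probability
(under the joint pmf `p`) that the coordinates in `S` take the values `x i`, `i ∈ S`. -/
def marg {n : ℕ} {A : Fin n → Type*} [∀ i, Fintype (A i)] [∀ i, DecidableEq (A i)]
    (p : (∀ i, A i) → ℝ) (S : Finset (Fin n)) (x : ∀ i, A i) : ℝ :=
  ∑ y : ∀ i, A i, if ∀ i ∈ S, y i = x i then p y else 0

lemma marg_pos {n : ℕ} {A : Fin n → Type*} [∀ i, Fintype (A i)] [∀ i, DecidableEq (A i)]
    (p : (∀ i, A i) → ℝ) (hpos : ∀ x, 0 < p x) (S : Finset (Fin n)) (x : ∀ i, A i) :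
    0 < marg p S x := by
  unfold marg
  apply Finset.sum_pos'
  · intro y _
    split
    · exact (hpos y).le
    · exact le_rfl
  · exact ⟨x, Finset.mem_univ x, by simpa using (hpos x)⟩

/-- equation (7) of the paper.
Let `X_1, …, X_n` have strictly positive joint pmf `p` on a finite product.  For
each `k` let `S k` and `B k` be disjoint subsets of `{1, …, k-1}` with
`pa k = S k ∪ B k`, and assume `p` factorizes along the DAG:
`p x = ∏ k, p(x_k | x_{pa k})`.  With `q x := ∏ k, p(x_k | x_{S k})`, the relative
entropy of `p` with respect to `q` is
`∑ x, p x * log (p x / q x) = ∑ k, I(X_k ; X_{B k} | X_{S k})`,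
where the conditional mutual information is written via marginal pmfs as
`I(X;Y|Z) = ∑ p(x,y,z) log (p(x,y,z) p(z) / (p(x,z) p(y,z)))`. -/
theorem relativeEntropy_eq_sum_condMutualInfo
    {n : ℕ} {A : Fin n → Type*} [∀ i, Fintype (A i)] [∀ i, DecidableEq (A i)]
    [∀ i, Nonempty (A i)]
    (p : (∀ i, A i) → ℝ) (hpos : ∀ x, 0 < p x) (hsum : ∑ x, p x = 1)
    (S B : Fin n → Finset (Fin n))
    (hS : ∀ k, ∀ u ∈ S k, u < k) (hB : ∀ k, ∀ u ∈ B k, u < k)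
    (hdisj : ∀ k, Disjoint (S k) (B k))
    (hfact : ∀ x, p x =
      ∏ k, marg p (insert k (S k ∪ B k)) x / marg p (S k ∪ B k) x)
    (q : (∀ i, A i) → ℝ)
    (hq : ∀ x, q x = ∏ k, marg p (insert k (S k)) x / marg p (S k) x) :
    ∑ x, p x * Real.log (p x / q x)
      = ∑ k, ∑ x, p x * Real.log
          ((marg p (insert k (S k ∪ B k)) x * marg p (S k) x)
            / (marg p (insert k (S k)) x * marg p (S k ∪ B k) x)) := by
  rw [Finset.sum_comm]
  refine Finset.sum_congr rfl fun x _ => ?_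
  rw [← Finset.mul_sum]
  congr 1
  have hratio : p x / q x = ∏ k,
      ((marg p (insert k (S k ∪ B k)) x * marg p (S k) x)
        / (marg p (insert k (S k)) x * marg p (S k ∪ B k) x)) := by
    rw [hfact x, hq x, ← Finset.prod_div_distrib]
    refine Finset.prod_congr rfl fun k _ => ?_
    have h1 := (marg_pos p hpos (insert k (S k ∪ B k)) x).ne'
    have h2 := (marg_pos p hpos (S k ∪ B k) x).ne'
    have h3 := (marg_pos p hpos (insert k (S k)) x).ne'
    have h4 := (marg_pos p hpos (S k) x).ne'
    field_simp
  rw [hratio, Real.log_prod]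
  intro k _
  have h1 := (marg_pos p hpos (insert k (S k ∪ B k)) x).ne'
  have h2 := (marg_pos p hpos (S k ∪ B k) x).ne'
  have h3 := (marg_pos p hpos (insert k (S k)) x).ne'
  have h4 := (marg_pos p hpos (S k) x).ne'
  positivity
end

section
/- Let X_1,…,X_n and Y be random variables taking values in finite nonempty sets, with strictly positive joint probability mass function p(y, x) on B × (A_1 × ⋯ × A_n). For each k ∈ {1,…,n} let S(k) and B(k) be disjoint subsets of {1,…,k−1} with pa(k) = S(k) ∪ B(k), and assume the marginal of (X_1,…,X_n) factorizes along the DAG: p(x) = ∏_{k=1}^n p(x_k | x_{pa(k)}) for all x. Define q(x) := ∏_{k=1}^n p(x_k | x_{S(k)}). Then ∑_{y,x} p(y,x) log( p(y,x) / ( p(y) q(x) ) ) = I( Y ; (X_1,…,X_n) ) + ∑_{k=1}^n I( X_k ; (X_u : u ∈ B(k)) | (X_u : u ∈ S(k)) ), where I denotes (conditional) mutual information. -/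
open Finset

/-- equation (13) of the paper.
Let `X_1, …, X_n` and `Y` have strictly positive joint pmf `p y x` on
`B × (A 1 × ⋯ × A n)`.  For each `k` let `S k` and `Bk k` be disjoint subsets of
`{1, …, k-1}` with `pa k = S k ∪ Bk k`, and assume the marginal `pX` of
`(X_1, …, X_n)` factorizes along the DAG: `pX x = ∏ k, pX(x_k | x_{pa k})`.
With `q x := ∏ k, pX(x_k | x_{S k})`, one has
`∑ p(y,x) log (p(y,x) / (p(y) q(x))) = I(Y; X_1, …, X_n) + ∑ k, I(X_k; X_{Bk k} | X_{S k})`,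
where `I(Y;X) = ∑ p(y,x) log (p(y,x) / (p(y) p(x)))` and conditional mutual
information is written via marginal pmfs. -/
theorem decoding_info_eq_mutualInfo_add_sum_condMutualInfo
    {n : ℕ} {B : Type*} [Fintype B] [Nonempty B]
    {A : Fin n → Type*} [∀ i, Fintype (A i)] [∀ i, DecidableEq (A i)]
    [∀ i, Nonempty (A i)]
    (p : B → (∀ i, A i) → ℝ) (hpos : ∀ y x, 0 < p y x)
    (hsum : ∑ y, ∑ x, p y x = 1)
    (S Bk : Fin n → Finset (Fin n))
    (hS : ∀ k, ∀ u ∈ S k, u < k) (hB : ∀ k, ∀ u ∈ Bk k, u < k)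
    (hdisj : ∀ k, Disjoint (S k) (Bk k))
    (pX : (∀ i, A i) → ℝ) (hpX : ∀ x, pX x = ∑ y, p y x)
    (hfact : ∀ x, pX x =
      ∏ k, marg pX (insert k (S k ∪ Bk k)) x / marg pX (S k ∪ Bk k) x)
    (q : (∀ i, A i) → ℝ)
    (hq : ∀ x, q x = ∏ k, marg pX (insert k (S k)) x / marg pX (S k) x) :
    ∑ y, ∑ x, p y x * Real.log (p y x / ((∑ x', p y x') * q x))
      = (∑ y, ∑ x, p y x * Real.log (p y x / ((∑ x', p y x') * pX x)))
        + ∑ k, ∑ x, pX x * Real.log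
            ((marg pX (insert k (S k ∪ Bk k)) x * marg pX (S k) x)
              / (marg pX (insert k (S k)) x * marg pX (S k ∪ Bk k) x)) := by
  have hpXpos : ∀ x, 0 < pX x := fun x => by
    rw [hpX]; exact Finset.sum_pos (fun y _ => hpos y x) Finset.univ_nonempty
  have hm : ∀ (T : Finset (Fin n)) (x : ∀ i, A i), 0 < marg pX T x := by
    intro T x
    refine Finset.sum_pos' (fun y _ => ?_) ⟨x, Finset.mem_univ x, ?_⟩
    · split_ifs
      · exact (hpXpos y).le
      · exact le_rfl
    · simp [hpXpos x]
  set r : Fin n → (∀ i, A i) → ℝ := fun k x =>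
    (marg pX (insert k (S k ∪ Bk k)) x * marg pX (S k) x)
      / (marg pX (insert k (S k)) x * marg pX (S k ∪ Bk k) x) with hrdef
  have hrpos : ∀ k x, 0 < r k x := fun k x =>
    div_pos (mul_pos (hm _ _) (hm _ _)) (mul_pos (hm _ _) (hm _ _))
  have hqpos : ∀ x, 0 < q x := fun x => by
    rw [hq]; exact Finset.prod_pos (fun k _ => div_pos (hm _ _) (hm _ _))
  have hratio : ∀ x, pX x / q x = ∏ k, r k x := by
    intro x
    rw [hfact x, hq x, ← Finset.prod_div_distrib]
    refine Finset.prod_congr rfl fun k _ => ?_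
    have h1 := (hm (insert k (S k ∪ Bk k)) x).ne'
    have h2 := (hm (S k ∪ Bk k) x).ne'
    have h3 := (hm (insert k (S k)) x).ne'
    have h4 := (hm (S k) x).ne'
    simp only [hrdef]
    field_simp
  have hpy : ∀ y, 0 < ∑ x', p y x' := fun y =>
    Finset.sum_pos (fun x _ => hpos y x) Finset.univ_nonempty
  have hsplit : ∀ y x, Real.log (p y x / ((∑ x', p y x') * q x))
      = Real.log (p y x / ((∑ x', p y x') * pX x)) + Real.log (pX x / q x) := by
    intro y x
    rw [← Real.log_mul (div_pos (hpos y x) (mul_pos (hpy y) (hpXpos x))).ne'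
      (div_pos (hpXpos x) (hqpos x)).ne']
    congr 1
    have h1 := (hpy y).ne'
    have h2 := (hpXpos x).ne'
    have h3 := (hqpos x).ne'
    field_simp
  simp_rw [hsplit, mul_add, Finset.sum_add_distrib]
  congr 1
  have hlog : ∀ x, Real.log (pX x / q x) = ∑ k, Real.log (r k x) := fun x => by
    rw [hratio x, Real.log_prod (fun k _ => (hrpos k x).ne')]
  rw [Finset.sum_comm]
  simp_rw [← Finset.sum_mul, ← hpX, hlog, Finset.mul_sum]
  exact Finset.sum_comm
end
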